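/- Tensor product of representations: if (W, L_W) and (W', L_{W'}) are representations of A(R), then W ⊗ W' with the sum 𝔥-action and L-operator L(z,λ) = L_W^{(12)}(z, λ+ηh^{(3)}) L_{W'}^{(13)}(z, λ−ηh^{(2)}) ∈ End(V ⊗ W ⊗ W') again satisfies the defining RLL relation and the weight-zero condition, hence is a representation of A(R). -/
import Mathlib


open Matrix Filter Topology
open scoped BigOperators

noncomputable section

/- The Cartan subalgebra `𝔥` is identified with `ℂ^m = Fin m → ℂ` via an
orthonormal basis `(h_ν)`; a diagonalizable `𝔥`-module is a space `ℂ^ι`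
together with a weight function `wt : ι → (Fin m → ℂ)`; `λ ∈ 𝔥` acts on the
basis vector `i` by the scalar `⟨wt i, λ⟩ = Σ_ν (wt i) ν * λ ν`. -/

variable {m : ℕ}

/-- pairing `⟨μ, X⟩` of a weight with an element of `𝔥`. -/
def pairH (μ X : Fin m → ℂ) : ℂ := ∑ ν, μ ν * X ν

section Emb

variable {α β γ : Type*} [Fintype α] [Fintype β] [Fintype γ]
variable [DecidableEq α] [DecidableEq β] [DecidableEq γ]

/-- `F(λ + c h^{(3)})` acting on factors 1,2 of a triple tensor product:
`f(λ + c h^{(k)}) = Σ_μ P_μ^{(k)} f(λ + c μ)` via the weight projections. -/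
def emb12sh (wt : γ → (Fin m → ℂ)) (c : ℂ)
    (F : (Fin m → ℂ) → Matrix (α × β) (α × β) ℂ) (lam : Fin m → ℂ) :
    Matrix (α × β × γ) (α × β × γ) ℂ :=
  fun p q => F (lam + c • wt p.2.2) (p.1, p.2.1) (q.1, q.2.1) *
    (if p.2.2 = q.2.2 then 1 else 0)

/-- `F(λ + c h^{(2)})` acting on factors 1,3. -/
def emb13sh (wt : β → (Fin m → ℂ)) (c : ℂ)
    (F : (Fin m → ℂ) → Matrix (α × γ) (α × γ) ℂ) (lam : Fin m → ℂ) :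
    Matrix (α × β × γ) (α × β × γ) ℂ :=
  fun p q => F (lam + c • wt p.2.1) (p.1, p.2.2) (q.1, q.2.2) *
    (if p.2.1 = q.2.1 then 1 else 0)

/-- `F(λ + c h^{(1)})` acting on factors 2,3. -/
def emb23sh (wt : α → (Fin m → ℂ)) (c : ℂ)
    (F : (Fin m → ℂ) → Matrix (β × γ) (β × γ) ℂ) (lam : Fin m → ℂ) :
    Matrix (α × β × γ) (α × β × γ) ℂ :=
  fun p q => F (lam + c • wt p.1) (p.2.1, p.2.2) (q.2.1, q.2.2) *
    (if p.1 = q.1 then 1 else 0)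

/-- plain (unshifted) embedding into factors 1,2. -/
def emb12p (M : Matrix (α × β) (α × β) ℂ) : Matrix (α × β × γ) (α × β × γ) ℂ :=
  fun p q => M (p.1, p.2.1) (q.1, q.2.1) * (if p.2.2 = q.2.2 then 1 else 0)

/-- plain embedding into factors 1,3. -/
def emb13p (M : Matrix (α × γ) (α × γ) ℂ) : Matrix (α × β × γ) (α × β × γ) ℂ :=
  fun p q => M (p.1, p.2.2) (q.1, q.2.2) * (if p.2.1 = q.2.1 then 1 else 0)

/-- plain embedding into factors 2,3. -/
def emb23p (M : Matrix (β × γ) (β × γ) ℂ) : Matrix (α × β × γ) (α × β × γ) ℂ :=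
  fun p q => M (p.2.1, p.2.2) (q.2.1, q.2.2) * (if p.1 = q.1 then 1 else 0)

/-- weight-zero condition on a matrix on a two-fold tensor product:
`[X^{(1)} + X^{(2)}, F] = 0` for all `X ∈ 𝔥`. -/
def WeightZero2 (wtA : α → (Fin m → ℂ)) (wtB : β → (Fin m → ℂ))
    (F : Matrix (α × β) (α × β) ℂ) : Prop :=
  ∀ X : Fin m → ℂ,
    Matrix.diagonal (fun p : α × β => pairH (wtA p.1) X + pairH (wtB p.2) X) * F =
    F * Matrix.diagonal (fun p : α × β => pairH (wtA p.1) X + pairH (wtB p.2) X)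

end Emb

section RMat

variable {ι : Type*} [Fintype ι] [DecidableEq ι]

/-- the flip `P` of `V ⊗ V`. -/
def flipP : Matrix (ι × ι) (ι × ι) ℂ := fun p q => if p.1 = q.2 ∧ p.2 = q.1 then 1 else 0

/-- the modified (dynamical) Yang–Baxter equation
`R^{(12)}(z₁₂,λ+ηh^{(3)}) R^{(13)}(z₁₃,λ−ηh^{(2)}) R^{(23)}(z₂₃,λ+ηh^{(1)}) =
 R^{(23)}(z₂₃,λ−ηh^{(1)}) R^{(13)}(z₁₃,λ+ηh^{(2)}) R^{(12)}(z₁₂,λ−ηh^{(3)})`. -/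
def MYBE (wt : ι → (Fin m → ℂ)) (η : ℂ)
    (R : ℂ → (Fin m → ℂ) → Matrix (ι × ι) (ι × ι) ℂ) : Prop :=
  ∀ z₁ z₂ z₃ lam,
    emb12sh wt η (R (z₁ - z₂)) lam * emb13sh wt (-η) (R (z₁ - z₃)) lam *
        emb23sh wt η (R (z₂ - z₃)) lam =
      emb23sh wt (-η) (R (z₂ - z₃)) lam * emb13sh wt η (R (z₁ - z₃)) lam *
        emb12sh wt (-η) (R (z₁ - z₂)) lam

/-- unitarity `R^{(12)}(z,λ) R^{(21)}(−z,λ) = Id`. -/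
def RUnitary (R : ℂ → (Fin m → ℂ) → Matrix (ι × ι) (ι × ι) ℂ) : Prop :=
  ∀ z lam, R z lam * (flipP * R (-z) lam * flipP) = 1

/-- a generalized quantum R-matrix: a weight-zero unitary solution of the
modified Yang–Baxter equation. -/
def IsGenR (wt : ι → (Fin m → ℂ)) (η : ℂ)
    (R : ℂ → (Fin m → ℂ) → Matrix (ι × ι) (ι × ι) ℂ) : Prop :=
  MYBE wt η R ∧ RUnitary R ∧ ∀ z lam, WeightZero2 wt wt (R z lam)

end RMat

section Rep

variable {ι κ : Type*} [Fintype ι] [DecidableEq ι] [Fintype κ] [DecidableEq κ]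

/-- the RLL relation defining representations of the elliptic quantum group
`A(R)`:
`R^{(12)}(z₁₂,λ+ηh^{(3)}) L^{(13)}(z₁,λ−ηh^{(2)}) L^{(23)}(z₂,λ+ηh^{(1)}) =
 L^{(23)}(z₂,λ−ηh^{(1)}) L^{(13)}(z₁,λ+ηh^{(2)}) R^{(12)}(z₁₂,λ−ηh^{(3)})`
in `End(V ⊗ V ⊗ W)`. -/
def RLL (wt : ι → (Fin m → ℂ)) (wtW : κ → (Fin m → ℂ)) (η : ℂ)
    (R : ℂ → (Fin m → ℂ) → Matrix (ι × ι) (ι × ι) ℂ)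
    (L : ℂ → (Fin m → ℂ) → Matrix (ι × κ) (ι × κ) ℂ) : Prop :=
  ∀ z₁ z₂ lam,
    emb12sh wtW η (R (z₁ - z₂)) lam * emb13sh wt (-η) (L z₁) lam *
        emb23sh wt η (L z₂) lam =
      emb23sh wt (-η) (L z₂) lam * emb13sh wt η (L z₁) lam *
        emb12sh wtW (-η) (R (z₁ - z₂)) lam

/-- a representation of `A(R)`: a weight-zero `L`-operator satisfying `RLL`. -/
def IsRep (wt : ι → (Fin m → ℂ)) (wtW : κ → (Fin m → ℂ)) (η : ℂ)
    (R : ℂ → (Fin m → ℂ) → Matrix (ι × ι) (ι × ι) ℂ)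
    (L : ℂ → (Fin m → ℂ) → Matrix (ι × κ) (ι × κ) ℂ) : Prop :=
  RLL wt wtW η R L ∧ ∀ z lam, WeightZero2 wt wtW (L z lam)

end Rep

section Tensor

variable {ι κ κ' : Type*} [Fintype ι] [DecidableEq ι]
variable [Fintype κ] [DecidableEq κ] [Fintype κ'] [DecidableEq κ']

/-- the tensor-product (coproduct) `L`-operator
`L^{(12)}(z, λ+ηh^{(3)}) L'^{(13)}(z, λ−ηh^{(2)})` on `V ⊗ W ⊗ W'`. -/
def tensorL (wtW : κ → (Fin m → ℂ)) (wtW' : κ' → (Fin m → ℂ)) (η : ℂ)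
    (L : ℂ → (Fin m → ℂ) → Matrix (ι × κ) (ι × κ) ℂ)
    (L' : ℂ → (Fin m → ℂ) → Matrix (ι × κ') (ι × κ') ℂ) :
    ℂ → (Fin m → ℂ) → Matrix (ι × κ × κ') (ι × κ × κ') ℂ :=
  fun z lam => emb12sh wtW' η (L z) lam * emb13sh wtW (-η) (L' z) lam

end Tensor
section Aux

variable {ι κ κ' : Type*} [Fintype ι] [DecidableEq ι]
variable [Fintype κ] [DecidableEq κ] [Fintype κ'] [DecidableEq κ']

lemma pairH_add' (μ ν X : Fin m → ℂ) : pairH (μ + ν) X = pairH μ X + pairH ν X := by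
  simp [pairH, add_mul, Finset.sum_add_distrib]

lemma pairH_single' (μ : Fin m → ℂ) (ν : Fin m) : pairH μ (Pi.single ν 1) = μ ν := by
  simp [pairH, Pi.single_apply]

lemma wz_iff {α β : Type*} [Fintype α] [Fintype β] [DecidableEq α] [DecidableEq β]
    (wtA : α → Fin m → ℂ) (wtB : β → Fin m → ℂ) (F : Matrix (α × β) (α × β) ℂ) :
    WeightZero2 wtA wtB F ↔
      ∀ p q, F p q ≠ 0 → wtA p.1 + wtB p.2 = wtA q.1 + wtB q.2 := by
  constructor
  · intro h p q hF
    funext ν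
    have h2 := congrFun (congrFun (h (Pi.single ν 1)) p) q
    rw [Matrix.diagonal_mul, Matrix.mul_diagonal] at h2
    simp only [pairH_single'] at h2
    have := mul_right_cancel₀ hF (h2.trans (mul_comm _ _))
    simpa using this
  · intro h X
    ext p q
    rw [Matrix.diagonal_mul, Matrix.mul_diagonal]
    by_cases hF : F p q = 0
    · simp [hF]
    · have e : pairH (wtA p.1) X + pairH (wtB p.2) X
          = pairH (wtA q.1) X + pairH (wtB q.2) X := by
        rw [← pairH_add', ← pairH_add', h p q hF]
      rw [e, mul_comm]

end Aux
section Aux2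

variable {ι κ κ' : Type*} [Fintype ι] [DecidableEq ι]
variable [Fintype κ] [DecidableEq κ] [Fintype κ'] [DecidableEq κ']

/-- `F(λ + c₃h^{(3)} + c₄h^{(4)})` on factors 1,2 of `V ⊗ V ⊗ W ⊗ W'`. -/
def A12 (wtW : κ → Fin m → ℂ) (wtW' : κ' → Fin m → ℂ) (c₃ c₄ : ℂ)
    (F : (Fin m → ℂ) → Matrix (ι × ι) (ι × ι) ℂ) (lam : Fin m → ℂ) :
    Matrix (ι × ι × κ × κ') (ι × ι × κ × κ') ℂ :=
  fun p q => F (lam + c₃ • wtW p.2.2.1 + c₄ • wtW' p.2.2.2) (p.1, p.2.1) (q.1, q.2.1) *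
    (if p.2.2.1 = q.2.2.1 then 1 else 0) * (if p.2.2.2 = q.2.2.2 then 1 else 0)

/-- `F(λ + c₂h^{(2)} + c₄h^{(4)})` on factors 1,3. -/
def A13 (wt : ι → Fin m → ℂ) (wtW' : κ' → Fin m → ℂ) (c₂ c₄ : ℂ)
    (F : (Fin m → ℂ) → Matrix (ι × κ) (ι × κ) ℂ) (lam : Fin m → ℂ) :
    Matrix (ι × ι × κ × κ') (ι × ι × κ × κ') ℂ :=
  fun p q => F (lam + c₂ • wt p.2.1 + c₄ • wtW' p.2.2.2) (p.1, p.2.2.1) (q.1, q.2.2.1) *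
    (if p.2.1 = q.2.1 then 1 else 0) * (if p.2.2.2 = q.2.2.2 then 1 else 0)

/-- `F(λ + c₂h^{(2)} + c₃h^{(3)})` on factors 1,4. -/
def A14 (wt : ι → Fin m → ℂ) (wtW : κ → Fin m → ℂ) (c₂ c₃ : ℂ)
    (F : (Fin m → ℂ) → Matrix (ι × κ') (ι × κ') ℂ) (lam : Fin m → ℂ) :
    Matrix (ι × ι × κ × κ') (ι × ι × κ × κ') ℂ :=
  fun p q => F (lam + c₂ • wt p.2.1 + c₃ • wtW p.2.2.1) (p.1, p.2.2.2) (q.1, q.2.2.2) *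
    (if p.2.1 = q.2.1 then 1 else 0) * (if p.2.2.1 = q.2.2.1 then 1 else 0)

/-- `F(λ + c₁h^{(1)} + c₄h^{(4)})` on factors 2,3. -/
def A23 (wt : ι → Fin m → ℂ) (wtW' : κ' → Fin m → ℂ) (c₁ c₄ : ℂ)
    (F : (Fin m → ℂ) → Matrix (ι × κ) (ι × κ) ℂ) (lam : Fin m → ℂ) :
    Matrix (ι × ι × κ × κ') (ι × ι × κ × κ') ℂ :=
  fun p q => F (lam + c₁ • wt p.1 + c₄ • wtW' p.2.2.2) (p.2.1, p.2.2.1) (q.2.1, q.2.2.1) *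
    (if p.1 = q.1 then 1 else 0) * (if p.2.2.2 = q.2.2.2 then 1 else 0)

/-- `F(λ + c₁h^{(1)} + c₃h^{(3)})` on factors 2,4. -/
def A24 (wt : ι → Fin m → ℂ) (wtW : κ → Fin m → ℂ) (c₁ c₃ : ℂ)
    (F : (Fin m → ℂ) → Matrix (ι × κ') (ι × κ') ℂ) (lam : Fin m → ℂ) :
    Matrix (ι × ι × κ × κ') (ι × ι × κ × κ') ℂ :=
  fun p q => F (lam + c₁ • wt p.1 + c₃ • wtW p.2.2.1) (p.2.1, p.2.2.2) (q.2.1, q.2.2.2) *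
    (if p.1 = q.1 then 1 else 0) * (if p.2.2.1 = q.2.2.1 then 1 else 0)

/-- blocks over factor 4. -/
def lift4 (M : κ' → Matrix (ι × ι × κ) (ι × ι × κ) ℂ) :
    Matrix (ι × ι × κ × κ') (ι × ι × κ × κ') ℂ :=
  fun p q => M p.2.2.2 (p.1, p.2.1, p.2.2.1) (q.1, q.2.1, q.2.2.1) *
    (if p.2.2.2 = q.2.2.2 then 1 else 0)

/-- blocks over factor 3. -/
def lift3 (M : κ → Matrix (ι × ι × κ') (ι × ι × κ') ℂ) :
    Matrix (ι × ι × κ × κ') (ι × ι × κ × κ') ℂ :=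
  fun p q => M p.2.2.1 (p.1, p.2.1, p.2.2.2) (q.1, q.2.1, q.2.2.2) *
    (if p.2.2.1 = q.2.2.1 then 1 else 0)

lemma lift4_mul (M N : κ' → Matrix (ι × ι × κ) (ι × ι × κ) ℂ) :
    (lift4 M : Matrix (ι × ι × κ × κ') (ι × ι × κ × κ') ℂ) * lift4 N
      = lift4 (fun k => M k * N k) := by
  ext p q
  simp only [lift4, Matrix.mul_apply, Fintype.sum_prod_type]
  simp only [mul_ite, ite_mul, mul_one, one_mul, mul_zero, zero_mul,
    Finset.sum_ite_irrel, Finset.sum_const_zero, Finset.sum_ite_eq, Finset.sum_ite_eq', Finset.mem_univ, if_true,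
    Finset.mul_sum, Finset.sum_mul]
  split_ifs with h
  · rw [h]
  · rfl

lemma lift3_mul (M N : κ → Matrix (ι × ι × κ') (ι × ι × κ') ℂ) :
    (lift3 M : Matrix (ι × ι × κ × κ') (ι × ι × κ × κ') ℂ) * lift3 N
      = lift3 (fun k => M k * N k) := by
  ext p q
  simp only [lift3, Matrix.mul_apply, Fintype.sum_prod_type]
  simp only [mul_ite, ite_mul, mul_one, one_mul, mul_zero, zero_mul,
    Finset.sum_ite_irrel, Finset.sum_const_zero, Finset.sum_ite_eq, Finset.sum_ite_eq', Finset.mem_univ, if_true,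
    Finset.mul_sum, Finset.sum_mul]
  split_ifs with h
  · rw [h]
  · rfl

end Aux2
section Aux3

variable {ι κ κ' : Type*} [Fintype ι] [DecidableEq ι]
variable [Fintype κ] [DecidableEq κ] [Fintype κ'] [DecidableEq κ']
variable (wt : ι → Fin m → ℂ) (wtW : κ → Fin m → ℂ) (wtW' : κ' → Fin m → ℂ)

lemma A12_lift4 (c₃ c₄ : ℂ) (F : (Fin m → ℂ) → Matrix (ι × ι) (ι × ι) ℂ) (lam : Fin m → ℂ) :
    A12 wtW wtW' c₃ c₄ F lam
      = lift4 (fun k => emb12sh wtW c₃ F (lam + c₄ • wtW' k)) := by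
  ext p q
  simp only [A12, lift4, emb12sh]
  rw [add_right_comm]

lemma A13_lift4 (c₂ c₄ : ℂ) (F : (Fin m → ℂ) → Matrix (ι × κ) (ι × κ) ℂ) (lam : Fin m → ℂ) :
    A13 wt wtW' c₂ c₄ F lam
      = lift4 (fun k => emb13sh wt c₂ F (lam + c₄ • wtW' k)) := by
  ext p q
  simp only [A13, lift4, emb13sh]
  rw [add_right_comm]

lemma A23_lift4 (c₁ c₄ : ℂ) (F : (Fin m → ℂ) → Matrix (ι × κ) (ι × κ) ℂ) (lam : Fin m → ℂ) :
    A23 wt wtW' c₁ c₄ F lam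
      = lift4 (fun k => emb23sh wt c₁ F (lam + c₄ • wtW' k)) := by
  ext p q
  simp only [A23, lift4, emb23sh]
  rw [add_right_comm]

lemma A12_lift3 (c₃ c₄ : ℂ) (F : (Fin m → ℂ) → Matrix (ι × ι) (ι × ι) ℂ) (lam : Fin m → ℂ) :
    A12 wtW wtW' c₃ c₄ F lam
      = lift3 (fun k => emb12sh wtW' c₄ F (lam + c₃ • wtW k)) := by
  ext p q
  simp only [A12, lift3, emb12sh]
  ring

lemma A14_lift3 (c₂ c₃ : ℂ) (F : (Fin m → ℂ) → Matrix (ι × κ') (ι × κ') ℂ) (lam : Fin m → ℂ) :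
    A14 wt wtW c₂ c₃ F lam
      = lift3 (fun k => emb13sh wt c₂ F (lam + c₃ • wtW k)) := by
  ext p q
  simp only [A14, lift3, emb13sh]
  rw [add_right_comm]

lemma A24_lift3 (c₁ c₃ : ℂ) (F : (Fin m → ℂ) → Matrix (ι × κ') (ι × κ') ℂ) (lam : Fin m → ℂ) :
    A24 wt wtW c₁ c₃ F lam
      = lift3 (fun k => emb23sh wt c₁ F (lam + c₃ • wtW k)) := by
  ext p q
  simp only [A24, lift3, emb23sh]
  rw [add_right_comm]

/-- decomposition (a): the `R`-embedding with the sum weight. -/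
lemma emb12sh_sum (c : ℂ) (F : (Fin m → ℂ) → Matrix (ι × ι) (ι × ι) ℂ) (lam : Fin m → ℂ) :
    emb12sh (fun p : κ × κ' => wtW p.1 + wtW' p.2) c F lam
      = A12 wtW wtW' c c F lam := by
  ext p q
  simp only [emb12sh, A12, smul_add, ← add_assoc]
  rcases p with ⟨p1, p2, p3, p4⟩
  rcases q with ⟨q1, q2, q3, q4⟩
  by_cases h3 : p3 = q3 <;> by_cases h4 : p4 = q4 <;>
    simp [h3, h4, Prod.ext_iff]

/-- decomposition (b): `emb13sh` of the tensor `L`-operator. -/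
lemma emb13sh_tensor (η : ℂ)
    (L : ℂ → (Fin m → ℂ) → Matrix (ι × κ) (ι × κ) ℂ)
    (L' : ℂ → (Fin m → ℂ) → Matrix (ι × κ') (ι × κ') ℂ)
    (z : ℂ) (c : ℂ) (lam : Fin m → ℂ) :
    emb13sh wt c (tensorL wtW wtW' η L L' z) lam
      = A13 wt wtW' c η (L z) lam * A14 wt wtW c (-η) (L' z) lam := by
  ext p q
  rcases p with ⟨p1, p2, p3, p4⟩
  rcases q with ⟨q1, q2, q3, q4⟩
  simp only [emb13sh, tensorL, emb12sh, A13, A14, Matrix.mul_apply, Fintype.sum_prod_type]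
  simp only [mul_ite, ite_mul, mul_one, one_mul, mul_zero, zero_mul,
    Finset.sum_ite_irrel, Finset.sum_const_zero, Finset.sum_ite_eq, Finset.sum_ite_eq', Finset.mem_univ, if_true,
    Finset.sum_mul, Finset.mul_sum]
  by_cases h2 : p2 = q2 <;> simp [h2]

end Aux3
section Aux4

variable {ι κ κ' : Type*} [Fintype ι] [DecidableEq ι]
variable [Fintype κ] [DecidableEq κ] [Fintype κ'] [DecidableEq κ']
variable (wt : ι → Fin m → ℂ) (wtW : κ → Fin m → ℂ) (wtW' : κ' → Fin m → ℂ)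

/-- decomposition (c): `emb23sh` of the tensor `L`-operator. -/
lemma emb23sh_tensor (η : ℂ)
    (L : ℂ → (Fin m → ℂ) → Matrix (ι × κ) (ι × κ) ℂ)
    (L' : ℂ → (Fin m → ℂ) → Matrix (ι × κ') (ι × κ') ℂ)
    (z : ℂ) (c : ℂ) (lam : Fin m → ℂ) :
    emb23sh wt c (tensorL wtW wtW' η L L' z) lam
      = A23 wt wtW' c η (L z) lam * A24 wt wtW c (-η) (L' z) lam := by
  ext p q
  rcases p with ⟨p1, p2, p3, p4⟩
  rcases q with ⟨q1, q2, q3, q4⟩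
  simp only [emb23sh, tensorL, emb12sh, emb13sh, A23, A24, Matrix.mul_apply,
    Fintype.sum_prod_type]
  simp only [mul_ite, ite_mul, mul_one, one_mul, mul_zero, zero_mul,
    Finset.sum_ite_irrel, Finset.sum_const_zero, Finset.sum_ite_eq, Finset.sum_ite_eq', Finset.mem_univ, if_true,
    Finset.sum_mul, Finset.mul_sum]
  by_cases h1 : p1 = q1 <;> simp [h1]

/-- commutation of `L'^{(14)}(λ + c(h²+h³) + …)` with `L^{(23)}(λ + c'(h¹+h⁴) + …)`. -/
lemma comm_A14_A23 (c c' : ℂ)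
    (M' : Matrix (ι × κ') (ι × κ') ℂ)
    (M : Matrix (ι × κ) (ι × κ) ℂ)
    (G' : (Fin m → ℂ) → Matrix (ι × κ') (ι × κ') ℂ)
    (G : (Fin m → ℂ) → Matrix (ι × κ) (ι × κ) ℂ)
    (hG' : ∀ lam p q, G' lam p q ≠ 0 → wt p.1 + wtW' p.2 = wt q.1 + wtW' q.2)
    (hG : ∀ lam p q, G lam p q ≠ 0 → wt p.1 + wtW p.2 = wt q.1 + wtW q.2)
    (lam : Fin m → ℂ) :
    A14 wt wtW c c G' lam * A23 wt wtW' c' c' G lam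
      = A23 wt wtW' c' c' G lam * A14 wt wtW c c G' lam := by
  ext p q
  rcases p with ⟨p1, p2, p3, p4⟩
  rcases q with ⟨q1, q2, q3, q4⟩
  simp only [A14, A23, Matrix.mul_apply, Fintype.sum_prod_type]
  simp only [mul_ite, ite_mul, mul_one, one_mul, mul_zero, zero_mul,
    Finset.sum_ite_irrel, Finset.sum_const_zero, Finset.sum_ite_eq, Finset.sum_ite_eq', Finset.mem_univ, if_true,
    Finset.sum_mul, Finset.mul_sum]
  -- goal should be a pointwise identity with deltas; handle by cases
  by_cases hA : wt p1 + wtW' p4 = wt q1 + wtW' q4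
  · by_cases hB : wt p2 + wtW p3 = wt q2 + wtW q3
    · have eL : lam + c' • wt p1 + c' • wtW' p4 = lam + c' • wt q1 + c' • wtW' q4 := by
        rw [add_assoc, add_assoc, ← smul_add, ← smul_add, hA]
      have eL' : lam + c • wt p2 + c • wtW p3 = lam + c • wt q2 + c • wtW q3 := by
        rw [add_assoc, add_assoc, ← smul_add, ← smul_add, hB]
      rw [eL, eL']
      ring
    · have h1 : ∀ μ, G μ (p2, p3) (q2, q3) = 0 := fun μ => by
        by_contra hne; exact hB (hG μ (p2, p3) (q2, q3) hne)
      rw [h1, h1]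
      ring
  · have h1 : ∀ μ, G' μ (p1, p4) (q1, q4) = 0 := fun μ => by
      by_contra hne; exact hA (hG' μ (p1, p4) (q1, q4) hne)
    rw [h1, h1]
    ring

/-- commutation of `L^{(13)}` with `L'^{(24)}`. -/
lemma comm_A13_A24 (c c' : ℂ)
    (G : (Fin m → ℂ) → Matrix (ι × κ) (ι × κ) ℂ)
    (G' : (Fin m → ℂ) → Matrix (ι × κ') (ι × κ') ℂ)
    (hG : ∀ lam p q, G lam p q ≠ 0 → wt p.1 + wtW p.2 = wt q.1 + wtW q.2)
    (hG' : ∀ lam p q, G' lam p q ≠ 0 → wt p.1 + wtW' p.2 = wt q.1 + wtW' q.2)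
    (lam : Fin m → ℂ) :
    A13 wt wtW' c c G lam * A24 wt wtW c' c' G' lam
      = A24 wt wtW c' c' G' lam * A13 wt wtW' c c G lam := by
  ext p q
  rcases p with ⟨p1, p2, p3, p4⟩
  rcases q with ⟨q1, q2, q3, q4⟩
  simp only [A13, A24, Matrix.mul_apply, Fintype.sum_prod_type]
  simp only [mul_ite, ite_mul, mul_one, one_mul, mul_zero, zero_mul,
    Finset.sum_ite_irrel, Finset.sum_const_zero, Finset.sum_ite_eq, Finset.sum_ite_eq', Finset.mem_univ, if_true,
    Finset.sum_mul, Finset.mul_sum]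
  by_cases hA : wt p1 + wtW p3 = wt q1 + wtW q3
  · by_cases hB : wt p2 + wtW' p4 = wt q2 + wtW' q4
    · have eG' : lam + c' • wt p1 + c' • wtW p3 = lam + c' • wt q1 + c' • wtW q3 := by
        rw [add_assoc, add_assoc, ← smul_add, ← smul_add, hA]
      have eG : lam + c • wt p2 + c • wtW' p4 = lam + c • wt q2 + c • wtW' q4 := by
        rw [add_assoc, add_assoc, ← smul_add, ← smul_add, hB]
      rw [eG, eG']
      ring
    · have h1 : ∀ μ, G' μ (p2, p4) (q2, q4) = 0 := fun μ => by
        by_contra hne; exact hB (hG' μ (p2, p4) (q2, q4) hne)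
      rw [h1, h1]
      ring
  · have h1 : ∀ μ, G μ (p1, p3) (q1, q3) = 0 := fun μ => by
      by_contra hne; exact hA (hG μ (p1, p3) (q1, q3) hne)
    rw [h1, h1]
    ring

end Aux4
section Aux5

variable {ι κ κ' : Type*} [Fintype ι] [DecidableEq ι]
variable [Fintype κ] [DecidableEq κ] [Fintype κ'] [DecidableEq κ']
variable (wt : ι → Fin m → ℂ) (wtW : κ → Fin m → ℂ) (wtW' : κ' → Fin m → ℂ)

/-- the `RLL` relation for `L`, lifted to `V ⊗ V ⊗ W ⊗ W'` with spectator factor 4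
and dynamical shift `+η h⁽⁴⁾`. -/
lemma RLL_spectator4 (η : ℂ) (R : ℂ → (Fin m → ℂ) → Matrix (ι × ι) (ι × ι) ℂ)
    (L : ℂ → (Fin m → ℂ) → Matrix (ι × κ) (ι × κ) ℂ)
    (hRLL : RLL wt wtW η R L) (z₁ z₂ : ℂ) (lam : Fin m → ℂ) :
    A12 wtW wtW' η η (R (z₁ - z₂)) lam * A13 wt wtW' (-η) η (L z₁) lam *
        A23 wt wtW' η η (L z₂) lam
      = A23 wt wtW' (-η) η (L z₂) lam * A13 wt wtW' η η (L z₁) lam *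
        A12 wtW wtW' (-η) η (R (z₁ - z₂)) lam := by
  rw [A12_lift4, A13_lift4, A23_lift4, A12_lift4, A13_lift4, A23_lift4,
    lift4_mul, lift4_mul, lift4_mul, lift4_mul]
  exact congrArg lift4 (funext fun k => hRLL z₁ z₂ (lam + η • wtW' k))

/-- the `RLL` relation for `L'`, lifted with spectator factor 3 and shift `−η h⁽³⁾`. -/
lemma RLL_spectator3 (η : ℂ) (R : ℂ → (Fin m → ℂ) → Matrix (ι × ι) (ι × ι) ℂ)
    (L' : ℂ → (Fin m → ℂ) → Matrix (ι × κ') (ι × κ') ℂ)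
    (hRLL : RLL wt wtW' η R L') (z₁ z₂ : ℂ) (lam : Fin m → ℂ) :
    A12 wtW wtW' (-η) η (R (z₁ - z₂)) lam * A14 wt wtW (-η) (-η) (L' z₁) lam *
        A24 wt wtW η (-η) (L' z₂) lam
      = A24 wt wtW (-η) (-η) (L' z₂) lam * A14 wt wtW η (-η) (L' z₁) lam *
        A12 wtW wtW' (-η) (-η) (R (z₁ - z₂)) lam := by
  rw [A12_lift3, A14_lift3, A24_lift3, A12_lift3, A14_lift3, A24_lift3,
    lift3_mul, lift3_mul, lift3_mul, lift3_mul]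
  exact congrArg lift3 (funext fun k => hRLL z₁ z₂ (lam + (-η) • wtW k))

end Aux5

/-- the tensor product of two representations of `A(R)`,
with the sum `𝔥`-action and `L`-operator
`L^{(12)}(z,λ+ηh^{(3)}) L'^{(13)}(z,λ−ηh^{(2)})`, is again a representation
of `A(R)`. -/
theorem tensor_product_representation
    {ι κ κ' : Type*} [Fintype ι] [DecidableEq ι]
    [Fintype κ] [DecidableEq κ] [Fintype κ'] [DecidableEq κ']
    (wt : ι → (Fin m → ℂ)) (wtW : κ → (Fin m → ℂ)) (wtW' : κ' → (Fin m → ℂ))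
    (η : ℂ) (R : ℂ → (Fin m → ℂ) → Matrix (ι × ι) (ι × ι) ℂ)
    (hR : IsGenR wt η R)
    (L : ℂ → (Fin m → ℂ) → Matrix (ι × κ) (ι × κ) ℂ)
    (L' : ℂ → (Fin m → ℂ) → Matrix (ι × κ') (ι × κ') ℂ)
    (hL : IsRep wt wtW η R L) (hL' : IsRep wt wtW' η R L') :
    IsRep wt (fun p : κ × κ' => wtW p.1 + wtW' p.2) η R
      (tensorL wtW wtW' η L L') := by
  have hLw : ∀ z lam (p q : ι × κ), L z lam p q ≠ 0 →
      wt p.1 + wtW p.2 = wt q.1 + wtW q.2 := fun z lam =>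
    (wz_iff wt wtW (L z lam)).mp (hL.2 z lam)
  have hL'w : ∀ z lam (p q : ι × κ'), L' z lam p q ≠ 0 →
      wt p.1 + wtW' p.2 = wt q.1 + wtW' q.2 := fun z lam =>
    (wz_iff wt wtW' (L' z lam)).mp (hL'.2 z lam)
  constructor
  · -- the RLL relation for the tensor L-operator
    intro z₁ z₂ lam
    rw [emb12sh_sum, emb13sh_tensor, emb23sh_tensor, emb23sh_tensor, emb13sh_tensor,
      emb12sh_sum]
    set a := A12 wtW wtW' η η (R (z₁ - z₂)) lam with ha
    set b := A13 wt wtW' (-η) η (L z₁) lam with hb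
    set c := A14 wt wtW (-η) (-η) (L' z₁) lam with hc
    set d := A23 wt wtW' η η (L z₂) lam with hd
    set e := A24 wt wtW η (-η) (L' z₂) lam with he
    set d₂ := A23 wt wtW' (-η) η (L z₂) lam with hd₂
    set b₂ := A13 wt wtW' η η (L z₁) lam with hb₂
    set a₂ := A12 wtW wtW' (-η) η (R (z₁ - z₂)) lam with ha₂
    set e₂ := A24 wt wtW (-η) (-η) (L' z₂) lam with he₂
    set c₂ := A14 wt wtW η (-η) (L' z₁) lam with hc₂
    set a₃ := A12 wtW wtW' (-η) (-η) (R (z₁ - z₂)) lam with ha₃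
    have h1 : c * d = d * c :=
      comm_A14_A23 wt wtW wtW' (-η) η 0 0 (fun μ => L' z₁ μ) (fun μ => L z₂ μ)
        (fun μ => hL'w z₁ μ) (fun μ => hLw z₂ μ) lam
    have h2 : a * b * d = d₂ * b₂ * a₂ :=
      RLL_spectator4 wt wtW wtW' η R L hL.1 z₁ z₂ lam
    have h3 : a₂ * c * e = e₂ * c₂ * a₃ :=
      RLL_spectator3 wt wtW wtW' η R L' hL'.1 z₁ z₂ lam
    have h4 : b₂ * e₂ = e₂ * b₂ :=
      comm_A13_A24 wt wtW wtW' η (-η) (fun μ => L z₁ μ) (fun μ => L' z₂ μ)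
        (fun μ => hLw z₁ μ) (fun μ => hL'w z₂ μ) lam
    calc a * (b * c) * (d * e)
        = a * b * (c * d) * e := by simp only [mul_assoc]
      _ = a * b * (d * c) * e := by rw [h1]
      _ = (a * b * d) * (c * e) := by simp only [mul_assoc]
      _ = (d₂ * b₂ * a₂) * (c * e) := by rw [h2]
      _ = d₂ * b₂ * (a₂ * c * e) := by simp only [mul_assoc]
      _ = d₂ * b₂ * (e₂ * c₂ * a₃) := by rw [h3]
      _ = d₂ * (b₂ * e₂) * (c₂ * a₃) := by simp only [mul_assoc]
      _ = d₂ * (e₂ * b₂) * (c₂ * a₃) := by rw [h4]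
      _ = d₂ * e₂ * (b₂ * c₂) * a₃ := by simp only [mul_assoc]
  · -- weight zero
    intro z lam
    rw [wz_iff]
    rintro ⟨p1, p2, p3⟩ ⟨q1, q2, q3⟩ hne
    show wt p1 + (wtW p2 + wtW' p3) = wt q1 + (wtW q2 + wtW' q3)
    rw [tensorL, Matrix.mul_apply] at hne
    obtain ⟨r, -, hr⟩ := Finset.exists_ne_zero_of_sum_ne_zero hne
    obtain ⟨r1, r2, r3⟩ := r
    simp only [emb12sh, emb13sh] at hr
    rcases mul_ne_zero_iff.mp hr with ⟨h12, h13⟩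
    rcases mul_ne_zero_iff.mp h12 with ⟨hL0, hd1⟩
    rcases mul_ne_zero_iff.mp h13 with ⟨hL0', hd2⟩
    have e1 : p3 = r3 := by
      by_contra hcon; simp [hcon] at hd1
    have e2 : r2 = q2 := by
      by_contra hcon; simp [hcon] at hd2
    have w1 := hLw z _ (p1, p2) (r1, r2) hL0
    have w2 := hL'w z _ (r1, r3) (q1, q3) hL0'
    simp only at w1 w2
    subst e1 e2
    linear_combination w1 + w2
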